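/- Fix a degree sequence d_1,…,d_n of positive integers with even sum, and attach d_i distinguishable half-edges to vertex i. For a multigraph G with these degrees, with sl(G) self-loops and edge multiplicities mult(e) for e in the support of its edge multiset, the number of perfect matchings of the ∑ d_i half-edges that produce G equals (∏_{i=1}^n d_i!)/(2^{sl(G)} ∏_{e} mult(e)!). Consequently, since the total number of perfect matchings is (∑_{i=1}^n d_i − 1)!!, the configuration model produces G with probability (∏_{i=1}^n d_i!)/((∑_{i=1}^n d_i − 1)!! · 2^{sl(G)} ∏_{e} mult(e)!). -/

import Mathlib

open Finset

/-- The degree of vertex `v` in the multigraph given by the edge multiset `G`: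
self-loops count twice. -/
def mdegree {n : ℕ} (G : Multiset (Sym2 (Fin n))) (v : Fin n) : ℕ :=
  (G.map fun e => if e = s(v, v) then 2 else if v ∈ e then 1 else 0).sum

/-- The number of self-loops of the multigraph `G`. -/
def selfLoops {n : ℕ} (G : Multiset (Sym2 (Fin n))) : ℕ :=
  Multiset.card (G.filter fun e => e.IsDiag)

/-- A perfect matching of the half-edges: a fixed-point-free involution. -/
def IsPerfectMatching {H : Type*} (f : H → H) : Prop :=
  (∀ x, f (f x) = x) ∧ ∀ x, f x ≠ x

/-- The matching `f` of the half-edges (half-edge `⟨i, j⟩` is attached to vertex `i`)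
produces the multigraph `G`: each matched pair `{x, f x}` forms the edge joining the
vertices carrying `x` and `f x`, so running over all half-edges each edge of `G` is
seen exactly twice. -/
def Produces {n : ℕ} {d : Fin n → ℕ}
    (f : (Σ i : Fin n, Fin (d i)) → (Σ i : Fin n, Fin (d i)))
    (G : Multiset (Sym2 (Fin n))) : Prop :=
  ((Finset.univ : Finset (Σ i : Fin n, Fin (d i))).val.map
      fun x => s(x.1, (f x).1)) = 2 • G

namespace CM

set_option linter.unusedSectionVars false
variable {V : Type*} [DecidableEq V] [Fintype V]

/-- general degree -/
def mdeg (G : Multiset (Sym2 V)) (v : V) : ℕ :=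
  (G.map fun e => if e = s(v, v) then 2 else if v ∈ e then 1 else 0).sum

/-- denominator -/
def Dfac (G : Multiset (Sym2 V)) : ℕ :=
  2 ^ Multiset.card (G.filter fun e => e.IsDiag) * ∏ e ∈ G.toFinset, (G.count e).factorial

lemma mdeg_cons (e : Sym2 V) (G : Multiset (Sym2 V)) (v : V) :
    mdeg (e ::ₘ G) v = (if e = s(v, v) then 2 else if v ∈ e then 1 else 0) + mdeg G v := by
  simp [mdeg]

lemma mdeg_zero (v : V) : mdeg (0 : Multiset (Sym2 V)) v = 0 := rfl

lemma weight_eq_sum (e : Sym2 V) (v : V) :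
    (if e = s(v, v) then 2 else if v ∈ e then 1 else 0)
      = ∑ u : V, (if u = v then 2 else 1) * (if e = s(v, u) then 1 else 0) := by
  induction e using Sym2.inductionOn with
  | hf p q =>
    by_cases hp : p = v <;> by_cases hq : q = v
    · simp only [hp, hq]
      rw [Finset.sum_eq_single v]
      · simp
      · intro u _ hu; simp [Sym2.eq_iff, hu, Ne.symm hu]
      · simp
    · simp only [hp]
      rw [Finset.sum_eq_single q]
      · simp [Sym2.eq_iff, hq, Ne.symm hq]
      · intro u _ hu; simp [Sym2.eq_iff, hu, Ne.symm hu, hq]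
      · simp
    · simp only [hq]
      rw [Finset.sum_eq_single p]
      · simp [Sym2.eq_iff, hp, Ne.symm hp, Sym2.mem_iff]
      · intro u _ hu; simp [Sym2.eq_iff, hu, Ne.symm hu, hp]
      · simp
    · rw [Finset.sum_eq_zero]
      · simp [Sym2.mem_iff, hp, hq, Sym2.eq_iff, Ne.symm hp, Ne.symm hq]
      · intro u _; simp [Sym2.eq_iff, hp, hq]

lemma mdeg_eq_sum_count (G : Multiset (Sym2 V)) (v : V) :
    mdeg G v = ∑ u : V, (if u = v then 2 else 1) * G.count s(v, u) := by
  induction G using Multiset.induction with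
  | empty => simp [mdeg]
  | cons e G ih =>
    rw [mdeg_cons, ih, weight_eq_sum e v, ← Finset.sum_add_distrib]
    refine Finset.sum_congr rfl fun u _ => ?_
    rw [Multiset.count_cons]
    rcases eq_or_ne u v with h2 | h2
    · subst h2
      by_cases h : e = s(u, u) <;> simp [h, eq_comm] <;> ring
    · by_cases h : e = s(v, u) <;> simp [h, h2, eq_comm] <;> ring

end CM

namespace CM
set_option linter.unusedSectionVars false
variable {V : Type*} [DecidableEq V] [Fintype V]

lemma Dfac_zero : Dfac (0 : Multiset (Sym2 V)) = 1 := by simp [Dfac]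

lemma Dfac_pos (G : Multiset (Sym2 V)) : 0 < Dfac G := by
  apply Nat.mul_pos (Nat.pow_pos (by norm_num))
  exact Finset.prod_pos fun e _ => Nat.factorial_pos _

lemma Dfac_cons (e : Sym2 V) (G : Multiset (Sym2 V)) :
    Dfac (e ::ₘ G) = ((if e.IsDiag then 2 else 1) * (G.count e + 1)) * Dfac G := by
  unfold Dfac
  have h1 : Multiset.card ((e ::ₘ G).filter fun f => f.IsDiag)
      = (if e.IsDiag then 1 else 0) + Multiset.card (G.filter fun f => f.IsDiag) := by
    rw [Multiset.filter_cons]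
    split_ifs <;> simp [Nat.add_comm]
  have h2 : ∏ f ∈ (e ::ₘ G).toFinset, ((e ::ₘ G).count f).factorial
      = (G.count e + 1) * ∏ f ∈ G.toFinset, (G.count f).factorial := by
    rw [Multiset.toFinset_cons]
    by_cases he : e ∈ G.toFinset
    · rw [Finset.insert_eq_self.mpr he]
      rw [← Finset.mul_prod_erase _ _ he, ← Finset.mul_prod_erase _ _ he,
        ← mul_assoc]
      have : ∏ f ∈ G.toFinset.erase e, ((e ::ₘ G).count f).factorial
          = ∏ f ∈ G.toFinset.erase e, (G.count f).factorial := by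
        refine Finset.prod_congr rfl fun f hf => ?_
        rw [Multiset.count_cons_of_ne (Finset.mem_erase.mp hf).1]
      rw [this, Multiset.count_cons_self, Nat.factorial_succ]
    · have hce : G.count e = 0 := by
        simpa [Multiset.count_eq_zero] using fun h => he (Multiset.mem_toFinset.mpr h)
      rw [Finset.prod_insert he, hce, Multiset.count_cons_self, hce]
      simp only [Nat.factorial_one, zero_add, one_mul]
      refine Finset.prod_congr rfl fun f hf => ?_
      rw [Multiset.count_cons_of_ne (show f ≠ e from fun h => he (h ▸ hf))]
  rw [h1, h2, pow_add]
  split_ifs <;> ring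

variable {H : Type*} [DecidableEq H] [Fintype H]

/-- product of factorials of fiber sizes -/
def Pfac (ℓ : H → V) (s : Finset H) : ℕ :=
  ∏ v, ((s.filter fun x => ℓ x = v).card).factorial

lemma fiber_erase (ℓ : H → V) {s : Finset H} {a : H} (ha : a ∈ s) (v : V) :
    ((s.filter fun x => ℓ x = v).card)
      = (((s.erase a).filter fun x => ℓ x = v).card) + (if ℓ a = v then 1 else 0) := by
  rw [Finset.filter_erase]
  by_cases h : ℓ a = v
  · have hm : a ∈ s.filter fun x => ℓ x = v := Finset.mem_filter.mpr ⟨ha, h⟩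
    have hpos : 0 < (s.filter fun x => ℓ x = v).card := Finset.card_pos.mpr ⟨a, hm⟩
    rw [Finset.card_erase_of_mem hm, if_pos h]
    omega
  · rw [Finset.erase_eq_of_notMem (s := s.filter fun x => ℓ x = v) (a := a) (fun hm => h (Finset.mem_filter.mp hm).2), if_neg h]
    omega

lemma Pfac_erase (ℓ : H → V) {s : Finset H} {a : H} (ha : a ∈ s) :
    Pfac ℓ s = (s.filter fun x => ℓ x = ℓ a).card * Pfac ℓ (s.erase a) := by
  unfold Pfac
  have key : ∀ v : V, ((s.filter fun x => ℓ x = v).card).factorial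
      = (if v = ℓ a then (s.filter fun x => ℓ x = ℓ a).card else 1)
        * (((s.erase a).filter fun x => ℓ x = v).card).factorial := by
    intro v
    by_cases h : v = ℓ a
    · subst h
      rw [fiber_erase ℓ ha (ℓ a), if_pos rfl, if_pos rfl, Nat.factorial_succ]
    · rw [fiber_erase ℓ ha v, if_neg (fun hh => h hh.symm), if_neg h]
      simp
  rw [Finset.prod_congr rfl fun v _ => key v, Finset.prod_mul_distrib,
    Finset.prod_ite_eq' Finset.univ (ℓ a) (fun _ => (s.filter fun x => ℓ x = ℓ a).card)]
  simp

end CM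

namespace CM
set_option linter.unusedSectionVars false
variable {V : Type*} [DecidableEq V] [Fintype V] {H : Type*} [DecidableEq H] [Fintype H]

/-- the matching predicate relative to a support set `s` -/
def Pred (ℓ : H → V) (s : Finset H) (G : Multiset (Sym2 V)) (f : H → H) : Prop :=
  (∀ x, f (f x) = x) ∧ (∀ x ∈ s, f x ∈ s ∧ f x ≠ x) ∧ (∀ x ∉ s, f x = x) ∧
    (s.val.map fun x => s(ℓ x, ℓ (f x))) = 2 • G

instance (ℓ : H → V) (s : Finset H) (G : Multiset (Sym2 V)) :
    DecidablePred (Pred ℓ s G) := fun f => by unfold Pred; infer_instance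

/-- matchings with support `s` producing `G` -/
def MS (ℓ : H → V) (s : Finset H) (G : Multiset (Sym2 V)) : Finset (H → H) :=
  Finset.univ.filter (Pred ℓ s G)

lemma G_eq_zero_of_mdeg_zero (G : Multiset (Sym2 V)) (h : ∀ v, mdeg G v = 0) : G = 0 := by
  by_contra hG
  obtain ⟨e, he⟩ := Multiset.exists_mem_of_ne_zero hG
  induction e using Sym2.inductionOn with
  | hf p q =>
    have hval : 1 ≤ (if s(p, q) = s(p, p) then 2 else if p ∈ s(p, q) then 1 else 0) := by
      have : p ∈ s(p, q) := Sym2.mem_mk_left p q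
      split_ifs <;> omega
    have hm : (if s(p, q) = s(p, p) then 2 else if p ∈ s(p, q) then 1 else 0)
        ∈ G.map fun e => if e = s(p, p) then 2 else if p ∈ e then 1 else 0 :=
      Multiset.mem_map_of_mem _ he
    have := Multiset.single_le_sum (fun x _ => Nat.zero_le x) _ hm
    have := h p
    unfold mdeg at this
    omega

lemma MS_empty (ℓ : H → V) : MS ℓ ∅ 0 = {fun x => x} := by
  ext f
  simp only [MS, Pred, Finset.mem_filter, Finset.mem_univ, true_and, Finset.mem_singleton]
  constructor
  · rintro ⟨-, -, h3, -⟩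
    funext x
    exact h3 x (Finset.notMem_empty x)
  · rintro rfl
    refine ⟨fun x => rfl, fun x hx => absurd hx (Finset.notMem_empty x), fun x _ => rfl, ?_⟩
    simp

end CM

namespace CM
set_option linter.unusedSectionVars false
variable {V : Type*} [DecidableEq V] [Fintype V] {H : Type*} [DecidableEq H] [Fintype H]

lemma s_val_eq {s : Finset H} {a b : H} (ha : a ∈ s) (hb : b ∈ s) (hab : b ≠ a) :
    s.val = a ::ₘ b ::ₘ ((s.erase a).erase b).val := by
  have h1 : ((s.erase a).erase b).val = (s.val.erase a).erase b := by
    simp [Finset.erase_val]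
  have hb' : b ∈ s.val.erase a := by
    rw [Multiset.mem_erase_of_ne hab]; exact hb
  rw [h1, Multiset.cons_erase hb', Multiset.cons_erase (by exact ha : a ∈ s.val)]

lemma two_smul_cons (G : Multiset (Sym2 V)) {e : Sym2 V} (he : e ∈ G) :
    2 • G = e ::ₘ e ::ₘ 2 • (G.erase e) := by
  conv_lhs => rw [← Multiset.cons_erase he]
  rw [two_nsmul, two_nsmul, Multiset.cons_add, Multiset.add_cons]

lemma mem_erase_erase {s : Finset H} {a b x : H} :
    x ∈ (s.erase a).erase b ↔ x ∈ s ∧ x ≠ a ∧ x ≠ b := by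
  simp only [Finset.mem_erase]; tauto

lemma fiber_card_eq (ℓ : H → V) (s : Finset H) (G : Multiset (Sym2 V)) {a b : H}
    (ha : a ∈ s) (hb : b ∈ s) (hab : b ≠ a) (he : s(ℓ a, ℓ b) ∈ G) :
    ((MS ℓ s G).filter fun f => f a = b).card
      = (MS ℓ ((s.erase a).erase b) (G.erase s(ℓ a, ℓ b))).card := by
  set e₀ := s(ℓ a, ℓ b) with he₀
  set s' := (s.erase a).erase b with hs'
  have hsval := s_val_eq ha hb hab
  have hG2 := two_smul_cons G he
  refine Finset.card_bij' (i := fun f _ => fun x => if x = a then a else if x = b then b else f x)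
    (j := fun g _ => fun x => if x = a then b else if x = b then a else g x) ?_ ?_ ?_ ?_
  · -- i maps into target
    intro f hf
    rw [Finset.mem_filter] at hf
    obtain ⟨hf, hfa⟩ := hf
    rw [MS, Finset.mem_filter] at hf
    obtain ⟨-, hff, hmem, hout, hprod⟩ := hf
    have hfb : f b = a := by rw [← hfa, hff]
    have hne : ∀ x, x ≠ a → x ≠ b → f x ≠ a ∧ f x ≠ b := by
      intro x hxa hxb
      constructor
      · intro h; apply hxb; rw [← hff x, h, hfa]
      · intro h; apply hxa; rw [← hff x, h, hfb]
    rw [MS, Finset.mem_filter]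
    refine ⟨Finset.mem_univ _, ?_, ?_, ?_, ?_⟩
    · intro x
      by_cases hxa : x = a
      · subst hxa; simp
      by_cases hxb : x = b
      · subst hxb; simp [hab]
      have h2 := hne x hxa hxb
      simp only [if_neg hxa, if_neg hxb, if_neg h2.1, if_neg h2.2]
      exact hff x
    · intro x hx
      rw [mem_erase_erase] at hx
      obtain ⟨hxs, hxa, hxb⟩ := hx
      have h2 := hne x hxa hxb
      simp only [if_neg hxa, if_neg hxb]
      refine ⟨mem_erase_erase.mpr ⟨(hmem x hxs).1, h2.1, h2.2⟩, (hmem x hxs).2⟩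
    · intro x hx
      by_cases hxa : x = a
      · subst hxa; simp
      by_cases hxb : x = b
      · subst hxb; simp [hab]
      simp only [if_neg hxa, if_neg hxb]
      exact hout x fun hxs => hx (mem_erase_erase.mpr ⟨hxs, hxa, hxb⟩)
    · -- produces
      have hmapeq : (s'.val.map fun x => s(ℓ x, ℓ (if x = a then a else if x = b then b else f x)))
          = s'.val.map fun x => s(ℓ x, ℓ (f x)) := by
        apply Multiset.map_congr rfl
        intro x hx
        have hx' : x ∈ s' := hx
        rw [mem_erase_erase] at hx'
        rw [if_neg hx'.2.1, if_neg hx'.2.2]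
      rw [hmapeq]
      rw [hsval, hG2] at hprod
      simp only [Multiset.map_cons, hfa, hfb] at hprod
      have he2 : s(ℓ b, ℓ a) = e₀ := Sym2.eq_swap
      rw [he2] at hprod
      exact (Multiset.cons_inj_right _).mp ((Multiset.cons_inj_right _).mp hprod)
  · -- j maps into source
    intro g hg
    rw [MS, Finset.mem_filter] at hg
    obtain ⟨-, hgg, hmem, hout, hprod⟩ := hg
    have hga : g a = a := hout a (by rw [mem_erase_erase]; tauto)
    have hgb : g b = b := hout b (by rw [mem_erase_erase]; tauto)
    have hne : ∀ x, x ≠ a → x ≠ b → g x ≠ a ∧ g x ≠ b := by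
      intro x hxa hxb
      constructor
      · intro h; apply hxa; rw [← hgg x, h, hga]
      · intro h; apply hxb; rw [← hgg x, h, hgb]
    rw [Finset.mem_filter, MS, Finset.mem_filter]
    refine ⟨⟨Finset.mem_univ _, ?_, ?_, ?_, ?_⟩, by simp⟩
    · intro x
      by_cases hxa : x = a
      · subst hxa; simp [hab, Ne.symm hab]
      by_cases hxb : x = b
      · subst hxb; simp [hab, Ne.symm hab]
      have h2 := hne x hxa hxb
      simp only [if_neg hxa, if_neg hxb, if_neg h2.1, if_neg h2.2]
      exact hgg x
    · intro x hx
      by_cases hxa : x = a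
      · subst hxa; simp only [if_pos rfl]; exact ⟨hb, hab⟩
      by_cases hxb : x = b
      · subst hxb; simp only [if_neg hab, if_pos rfl]; exact ⟨ha, Ne.symm hab⟩
      simp only [if_neg hxa, if_neg hxb]
      have hxs' : x ∈ s' := mem_erase_erase.mpr ⟨hx, hxa, hxb⟩
      have h3 := hmem x hxs'
      exact ⟨(mem_erase_erase.mp h3.1).1, h3.2⟩
    · intro x hx
      have hxa : x ≠ a := fun h => hx (h ▸ ha)
      have hxb : x ≠ b := fun h => hx (h ▸ hb)
      simp only [if_neg hxa, if_neg hxb]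
      exact hout x fun hxs' => hx (mem_erase_erase.mp hxs').1
    · rw [hsval, hG2]
      simp only [Multiset.map_cons, if_pos trivial, if_neg hab]
      have hmapeq : (s'.val.map fun x => s(ℓ x, ℓ (if x = a then b else if x = b then a else g x)))
          = s'.val.map fun x => s(ℓ x, ℓ (g x)) := by
        apply Multiset.map_congr rfl
        intro x hx
        have hx' : x ∈ s' := hx
        rw [mem_erase_erase] at hx'
        rw [if_neg hx'.2.1, if_neg hx'.2.2]
      rw [hmapeq, hprod]
      congr 2
      exact Sym2.eq_swap
  · -- left inverse
    intro f hf
    rw [Finset.mem_filter] at hf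
    obtain ⟨hf, hfa⟩ := hf
    rw [MS, Finset.mem_filter] at hf
    obtain ⟨-, hff, hmem, hout, hprod⟩ := hf
    have hfb : f b = a := by rw [← hfa, hff]
    funext x
    by_cases hxa : x = a
    · subst hxa; simp only [if_pos rfl]; exact hfa.symm
    by_cases hxb : x = b
    · subst hxb; simp only [if_neg hab, if_pos rfl]; exact hfb.symm
    simp only [if_neg hxa, if_neg hxb]
  · -- right inverse
    intro g hg
    rw [MS, Finset.mem_filter] at hg
    obtain ⟨-, hgg, hmem, hout, hprod⟩ := hg
    have hga : g a = a := hout a (by rw [mem_erase_erase]; tauto)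
    have hgb : g b = b := hout b (by rw [mem_erase_erase]; tauto)
    funext x
    by_cases hxa : x = a
    · subst hxa; simp only [if_pos rfl]; exact hga.symm
    by_cases hxb : x = b
    · subst hxb; simp only [if_neg hab, if_pos rfl]; exact hgb.symm
    simp only [if_neg hxa, if_neg hxb]

end CM

namespace CM
set_option linter.unusedSectionVars false
variable {V : Type*} [DecidableEq V] [Fintype V] {H : Type*} [DecidableEq H] [Fintype H]

lemma fiber_card_zero_of_bad (ℓ : H → V) (s : Finset H) (G : Multiset (Sym2 V)) {a b : H}
    (ha : a ∈ s) (hbad : b ∉ s.erase a) :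
    ((MS ℓ s G).filter fun f => f a = b).card = 0 := by
  rw [Finset.card_eq_zero, Finset.eq_empty_iff_forall_notMem]
  intro f hf
  rw [Finset.mem_filter, MS, Finset.mem_filter] at hf
  obtain ⟨⟨-, -, hmem, -, -⟩, hfa⟩ := hf
  exact hbad (Finset.mem_erase.mpr ⟨hfa ▸ (hmem a ha).2, hfa ▸ (hmem a ha).1⟩)

lemma fiber_card_zero_of_not_mem (ℓ : H → V) (s : Finset H) (G : Multiset (Sym2 V)) {a b : H}
    (ha : a ∈ s) (hbad : s(ℓ a, ℓ b) ∉ G) :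
    ((MS ℓ s G).filter fun f => f a = b).card = 0 := by
  rw [Finset.card_eq_zero, Finset.eq_empty_iff_forall_notMem]
  intro f hf
  rw [Finset.mem_filter, MS, Finset.mem_filter] at hf
  obtain ⟨⟨-, -, -, -, hprod⟩, hfa⟩ := hf
  apply hbad
  have hmem : s(ℓ a, ℓ b) ∈ 2 • G := by
    rw [← hprod, ← hfa]
    exact Multiset.mem_map_of_mem _ (by exact ha)
  rw [← Multiset.count_pos] at hmem ⊢
  rw [Multiset.count_nsmul] at hmem
  omega

lemma weight_pair (p q v : V) :
    (if s(p, q) = s(v, v) then 2 else if v ∈ s(p, q) then 1 else 0)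
      = (if p = v then 1 else 0) + (if q = v then 1 else 0) := by
  by_cases h1 : p = v <;> by_cases h2 : q = v <;>
    simp [Sym2.eq_iff, Sym2.mem_iff, h1, h2, eq_comm]

lemma hdeg_step (ℓ : H → V) {s : Finset H} {G : Multiset (Sym2 V)} {a b : H}
    (ha : a ∈ s) (hb : b ∈ s) (hab : b ≠ a) (he : s(ℓ a, ℓ b) ∈ G)
    (hdeg : ∀ v, mdeg G v = (s.filter fun x => ℓ x = v).card) :
    ∀ v, mdeg (G.erase s(ℓ a, ℓ b)) v
      = (((s.erase a).erase b).filter fun x => ℓ x = v).card := by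
  intro v
  have h1 := mdeg_cons s(ℓ a, ℓ b) (G.erase s(ℓ a, ℓ b)) v
  rw [Multiset.cons_erase he] at h1
  rw [weight_pair] at h1
  have h2 := fiber_erase ℓ ha v
  have h3 := fiber_erase ℓ (Finset.mem_erase.mpr ⟨hab, hb⟩) v
  have h4 := hdeg v
  rw [h1, h2, h3] at h4
  split_ifs at h4 <;> omega

lemma diag_ite (p q : V) :
    (if (s(p, q) : Sym2 V).IsDiag then 2 else 1) = if q = p then 2 else 1 := by
  have hiff : (s(p, q) : Sym2 V).IsDiag ↔ q = p := by
    rw [Sym2.mk_isDiag_iff]; exact eq_comm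
  simp only [hiff]

theorem main_count (N : ℕ) (ℓ : H → V) (s : Finset H) (G : Multiset (Sym2 V))
    (hcard : s.card ≤ N) (hdeg : ∀ v, mdeg G v = (s.filter fun x => ℓ x = v).card) :
    (MS ℓ s G).card * Dfac G = Pfac ℓ s := by
  induction N generalizing s G with
  | zero =>
    have hs : s = ∅ := Finset.card_eq_zero.mp (Nat.le_zero.mp hcard)
    subst hs
    have hG : G = 0 := G_eq_zero_of_mdeg_zero G (fun v => by rw [hdeg v]; simp)
    subst hG
    rw [MS_empty, Dfac_zero, Pfac]
    simp
  | succ N ih =>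
    rcases Finset.eq_empty_or_nonempty s with rfl | ⟨a, ha⟩
    · exact ih ∅ G (Nat.zero_le N) hdeg
    · set fa := (s.filter fun x => ℓ x = ℓ a).card with hfa_def
      have hfa_pos : 0 < fa :=
        Finset.card_pos.mpr ⟨a, Finset.mem_filter.mpr ⟨ha, rfl⟩⟩
      apply Nat.eq_of_mul_eq_mul_right hfa_pos
      -- Step A : fiberwise over the partner of a
      have stepA : (MS ℓ s G).card
          = ∑ b ∈ s.erase a, ((MS ℓ s G).filter fun f => f a = b).card := by
        rw [Finset.card_eq_sum_card_fiberwise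
          (f := fun f => f a) (t := Finset.univ) (fun f _ => Finset.mem_univ _)]
        rw [← Finset.sum_subset (Finset.subset_univ (s.erase a))]
        intro b _ hbad
        exact fiber_card_zero_of_bad ℓ s G ha hbad
      -- the per-vertex claim
      have claim : ∀ u : V,
          ∑ b ∈ (s.erase a).filter (fun x => ℓ x = u),
              ((MS ℓ s G).filter fun f => f a = b).card * Dfac G * fa
            = Pfac ℓ s * ((if u = ℓ a then 2 else 1) * G.count s(ℓ a, u)) := by
        intro u
        rcases Nat.eq_zero_or_pos (G.count s(ℓ a, u)) with hcnt | hcnt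
        · rw [hcnt, mul_zero, mul_zero]
          apply Finset.sum_eq_zero
          intro b hbmem
          rw [Finset.mem_filter] at hbmem
          have : s(ℓ a, ℓ b) ∉ G := by
            intro hm
            rw [hbmem.2] at hm
            have h0 := Multiset.count_pos.mpr hm
            exact Nat.lt_irrefl 0 (hcnt ▸ h0)
          rw [fiber_card_zero_of_not_mem ℓ s G ha this]
          ring
        · have he : s(ℓ a, u) ∈ G := Multiset.count_pos.mp hcnt
          set t := (s.erase a).filter (fun x => ℓ x = u) with ht_def
          clear_value t
          have htpos : 0 < t.card := by
            have hsum := mdeg_eq_sum_count G u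
            have hterm := Finset.single_le_sum
              (f := fun w => (if w = u then 2 else 1) * G.count s(u, w))
              (fun w _ => Nat.zero_le _) (Finset.mem_univ (ℓ a))
            rw [← hsum] at hterm
            have hswap : G.count s(u, ℓ a) = G.count s(ℓ a, u) := by rw [Sym2.eq_swap]
            have hterm2 : (if ℓ a = u then 2 else 1) * G.count s(ℓ a, u) ≤ mdeg G u := by
              rw [← hswap]; exact hterm
            clear hterm
            have hfib := fiber_erase ℓ ha u
            rw [hdeg u] at hterm2
            rw [ht_def]
            clear stepA hsum hswap ih hdeg
            by_cases hua : ℓ a = u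
            · rw [if_pos hua] at hterm2
              rw [if_pos hua] at hfib
              omega
            · rw [if_neg hua] at hterm2
              rw [if_neg hua] at hfib
              omega
          apply Nat.eq_of_mul_eq_mul_left htpos
          rw [Finset.mul_sum]
          have hterm : ∀ b ∈ t,
              t.card * (((MS ℓ s G).filter fun f => f a = b).card * Dfac G * fa)
                = Pfac ℓ (s.erase a) * ((if u = ℓ a then 2 else 1) * G.count s(ℓ a, u)) * fa := by
            intro b hbmem
            rw [ht_def, Finset.mem_filter, Finset.mem_erase] at hbmem
            obtain ⟨⟨hba, hbs⟩, hu⟩ := hbmem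
            have he' : s(ℓ a, ℓ b) ∈ G := by rw [hu]; exact he
            have hcb := fiber_card_eq ℓ s G ha hbs hba he'
            have hcard'' : ((s.erase a).erase b).card ≤ N := by
              have h1 : (s.erase a).card = s.card - 1 := Finset.card_erase_of_mem ha
              have h2 : ((s.erase a).erase b).card = (s.erase a).card - 1 :=
                Finset.card_erase_of_mem (Finset.mem_erase.mpr ⟨hba, hbs⟩)
              clear * - h1 h2 hcard
              omega
            have hdeg'' := hdeg_step ℓ ha hbs hba he' hdeg
            have hih := ih ((s.erase a).erase b) (G.erase s(ℓ a, ℓ b)) hcard'' hdeg''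
            have hDfac : Dfac G = ((if u = ℓ a then 2 else 1) * G.count s(ℓ a, u))
                * Dfac (G.erase s(ℓ a, ℓ b)) := by
              conv_lhs => rw [← Multiset.cons_erase he']
              rw [Dfac_cons]
              congr 2
              · rw [hu, diag_ite]
              · rw [hu, Multiset.count_erase_self]
                clear * - hcnt
                omega
            have hPf : Pfac ℓ (s.erase a) = t.card * Pfac ℓ ((s.erase a).erase b) := by
              rw [Pfac_erase ℓ (Finset.mem_erase.mpr ⟨hba, hbs⟩)]
              simp only [hu]
              rw [ht_def]
            rw [hcb, hDfac, hPf, ← hih]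
            ring
          rw [Finset.sum_congr rfl hterm, Finset.sum_const, smul_eq_mul]
          rw [Pfac_erase ℓ ha, ← hfa_def]
          ring
      calc (MS ℓ s G).card * Dfac G * fa
          = ∑ b ∈ s.erase a,
              ((MS ℓ s G).filter fun f => f a = b).card * Dfac G * fa := by
            rw [stepA, Finset.sum_mul, Finset.sum_mul]
        _ = ∑ u : V, ∑ b ∈ (s.erase a).filter (fun x => ℓ x = u),
              ((MS ℓ s G).filter fun f => f a = b).card * Dfac G * fa := by
            rw [Finset.sum_fiberwise_of_maps_to (fun b _ => Finset.mem_univ (ℓ b))]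
        _ = ∑ u : V, Pfac ℓ s * ((if u = ℓ a then 2 else 1) * G.count s(ℓ a, u)) := by
            exact Finset.sum_congr rfl fun u _ => claim u
        _ = Pfac ℓ s * ∑ u : V, (if u = ℓ a then 2 else 1) * G.count s(ℓ a, u) := by
            rw [Finset.mul_sum]
        _ = Pfac ℓ s * fa := by rw [← mdeg_eq_sum_count, hdeg (ℓ a)]

end CM

namespace CM
set_option linter.unusedSectionVars false

lemma nat_card_eq_filter {α : Type*} [Fintype α] [DecidableEq α] (p q : α → Prop)
    [DecidablePred q] (h : ∀ x, p x ↔ q x) :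
    Nat.card {x // p x} = (Finset.univ.filter q).card := by
  rw [Nat.card_congr (Equiv.subtypeEquivRight h), Nat.card_eq_fintype_card,
    Fintype.card_subtype]

open Nat in
lemma fact_two_mul (m : ℕ) :
    (2 * m).factorial = 2 ^ m * m.factorial * (2 * m - 1)‼ := by
  cases m with
  | zero => rfl
  | succ m =>
    have h : 2 * (m + 1) = (2 * (m + 1) - 1) + 1 := by omega
    rw [h, Nat.factorial_eq_mul_doubleFactorial, ← h, Nat.doubleFactorial_two_mul]

end CM

section glue
open scoped Nat

variable {n : ℕ} {d : Fin n → ℕ}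

/-- fiber of sigma fst -/
def fibEquiv (d : Fin n → ℕ) (v : Fin n) :
    {x : Σ i : Fin n, Fin (d i) // x.fst = v} ≃ Fin (d v) where
  toFun x := x.2 ▸ x.1.2
  invFun y := ⟨⟨v, y⟩, rfl⟩
  left_inv := by rintro ⟨⟨i, y⟩, rfl⟩; rfl
  right_inv := by intro y; rfl

lemma fiber_card_univ (d : Fin n → ℕ) (v : Fin n) :
    ((Finset.univ : Finset (Σ i : Fin n, Fin (d i))).filter fun x => x.fst = v).card
      = d v := by
  rw [← Fintype.card_subtype, Fintype.card_congr (fibEquiv d v), Fintype.card_fin]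

lemma Pfac_univ (d : Fin n → ℕ) :
    CM.Pfac (Sigma.fst : (Σ i : Fin n, Fin (d i)) → Fin n) Finset.univ
      = ∏ i, (d i).factorial := by
  unfold CM.Pfac
  exact Finset.prod_congr rfl fun v _ => by rw [fiber_card_univ]

lemma count_produces (G : Multiset (Sym2 (Fin n)))
    (hdeg : ∀ i, mdegree G i = d i) :
    Nat.card {f : (Σ i : Fin n, Fin (d i)) → (Σ i : Fin n, Fin (d i)) //
          IsPerfectMatching f ∧ Produces f G}
        * (2 ^ selfLoops G * ∏ e ∈ G.toFinset, (G.count e).factorial)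
      = ∏ i, (d i).factorial := by
  have hiff : ∀ f : (Σ i : Fin n, Fin (d i)) → (Σ i : Fin n, Fin (d i)),
      (IsPerfectMatching f ∧ Produces f G) ↔ CM.Pred Sigma.fst Finset.univ G f := by
    intro f
    unfold IsPerfectMatching Produces CM.Pred
    constructor
    · rintro ⟨⟨h1, h2⟩, h3⟩
      exact ⟨h1, fun x _ => ⟨Finset.mem_univ _, h2 x⟩,
        fun x hx => absurd (Finset.mem_univ x) hx, h3⟩
    · rintro ⟨h1, h2, h3, h4⟩
      exact ⟨⟨h1, fun x => (h2 x (Finset.mem_univ x)).2⟩, h4⟩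
  rw [CM.nat_card_eq_filter _ _ hiff]
  have hmain := CM.main_count (Finset.univ : Finset (Σ i : Fin n, Fin (d i))).card
    Sigma.fst Finset.univ G le_rfl
    (fun v => by rw [show CM.mdeg G v = mdegree G v from rfl, hdeg v, fiber_card_univ])
  rw [Pfac_univ] at hmain
  exact hmain

lemma count_all (heven : Even (∑ i, d i)) :
    Nat.card {f : (Σ i : Fin n, Fin (d i)) → (Σ i : Fin n, Fin (d i)) //
        IsPerfectMatching f} = (∑ i, d i - 1)‼ := by
  obtain ⟨m, hm⟩ := heven
  have hcardH : Fintype.card (Σ i : Fin n, Fin (d i)) = 2 * m := by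
    simp [Fintype.card_sigma, hm]; omega
  set G0 : Multiset (Sym2 (Fin 1)) := Multiset.replicate m s(0, 0) with hG0
  have hprodconst : ∀ f : (Σ i : Fin n, Fin (d i)) → (Σ i : Fin n, Fin (d i)),
      ((Finset.univ : Finset (Σ i : Fin n, Fin (d i))).val.map
        fun x => s((0 : Fin 1), (0 : Fin 1))) = 2 • G0 := by
    intro f
    rw [Multiset.map_const', hG0]
    rw [show ((Finset.univ : Finset (Σ i : Fin n, Fin (d i))).val.card)
      = 2 * m from hcardH]
    rw [two_nsmul, ← Multiset.replicate_add]
    congr 1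
    omega
  have hiff : ∀ f : (Σ i : Fin n, Fin (d i)) → (Σ i : Fin n, Fin (d i)),
      IsPerfectMatching f ↔ CM.Pred (fun _ => (0 : Fin 1)) Finset.univ G0 f := by
    intro f
    unfold IsPerfectMatching CM.Pred
    constructor
    · rintro ⟨h1, h2⟩
      exact ⟨h1, fun x _ => ⟨Finset.mem_univ _, h2 x⟩,
        fun x hx => absurd (Finset.mem_univ x) hx, hprodconst f⟩
    · rintro ⟨h1, h2, h3, h4⟩
      exact ⟨h1, fun x => (h2 x (Finset.mem_univ x)).2⟩
  have hdeg0 : ∀ v : Fin 1, CM.mdeg G0 v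
      = ((Finset.univ : Finset (Σ i : Fin n, Fin (d i))).filter
          fun x => (fun _ => (0 : Fin 1)) x = v).card := by
    intro v
    have hv : v = 0 := Subsingleton.elim v 0
    subst hv
    have h1 : CM.mdeg G0 0 = 2 * m := by
      unfold CM.mdeg
      rw [hG0, Multiset.map_replicate, Multiset.sum_replicate, if_pos rfl, smul_eq_mul]
      omega
    have h2 : ((Finset.univ : Finset (Σ i : Fin n, Fin (d i))).filter
        fun x => (fun _ => (0 : Fin 1)) x = 0).card = 2 * m := by
      rw [Finset.filter_true_of_mem (fun x _ => rfl), Finset.card_univ, hcardH]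
    rw [h1, h2]
  have hmain := CM.main_count (Finset.univ : Finset (Σ i : Fin n, Fin (d i))).card
    (fun _ => (0 : Fin 1)) Finset.univ G0 le_rfl hdeg0
  rw [CM.nat_card_eq_filter _ _ hiff]
  have hDfac : CM.Dfac G0 = 2 ^ m * m.factorial := by
    unfold CM.Dfac
    have hf : G0.filter (fun e => e.IsDiag) = G0 := by
      rw [Multiset.filter_eq_self]
      intro e he
      rw [hG0] at he
      rw [Multiset.eq_of_mem_replicate he]
      exact Sym2.mk_isDiag_iff.mpr rfl
    rw [hf, hG0, Multiset.card_replicate]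
    congr 1
    cases m with
    | zero => simp
    | succ k =>
      rw [Multiset.toFinset_replicate, if_neg (Nat.succ_ne_zero k)]
      rw [Finset.prod_singleton, Multiset.count_replicate_self]
  have hPfac : CM.Pfac (fun _ => (0 : Fin 1))
      (Finset.univ : Finset (Σ i : Fin n, Fin (d i))) = (2 * m).factorial := by
    unfold CM.Pfac
    rw [Fin.prod_univ_one]
    have : ((Finset.univ : Finset (Σ i : Fin n, Fin (d i))).filter
        fun x => (fun _ => (0 : Fin 1)) x = 0) = Finset.univ :=
      Finset.filter_true_of_mem fun x _ => rfl
    rw [this, ← hcardH]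
    rfl
  rw [hPfac, hDfac, CM.fact_two_mul] at hmain
  have hpos : 0 < 2 ^ m * m.factorial :=
    Nat.mul_pos (Nat.pow_pos (by norm_num)) (Nat.factorial_pos _)
  have hcards : (CM.MS (fun _ : (Σ i : Fin n, Fin (d i)) => (0 : Fin 1)) Finset.univ G0).card
      = (2 * m - 1)‼ := by
    apply Nat.eq_of_mul_eq_mul_right hpos
    rw [hmain]
    ring
  have hMSeq : (Finset.univ.filter
      (CM.Pred (fun _ : (Σ i : Fin n, Fin (d i)) => (0 : Fin 1)) Finset.univ G0)).card
      = (CM.MS (fun _ : (Σ i : Fin n, Fin (d i)) => (0 : Fin 1)) Finset.univ G0).card := rfl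
  rw [hMSeq, hcards]
  congr 1
  omega

end glue

theorem configuration_model_probability (n : ℕ) (d : Fin n → ℕ) (hd : ∀ i, 0 < d i)
    (heven : Even (∑ i, d i)) (G : Multiset (Sym2 (Fin n)))
    (hdeg : ∀ i, mdegree G i = d i) :
    ((Nat.card {f : (Σ i : Fin n, Fin (d i)) → (Σ i : Fin n, Fin (d i)) //
          IsPerfectMatching f ∧ Produces f G} : ℚ)
        = (∏ i, (d i).factorial : ℚ) /
            (2 ^ selfLoops G * ∏ e ∈ G.toFinset, (G.count e).factorial)) ∧
    ((Nat.card {f : (Σ i : Fin n, Fin (d i)) → (Σ i : Fin n, Fin (d i)) //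
          IsPerfectMatching f} : ℚ)
        = Nat.doubleFactorial (∑ i, d i - 1)) ∧
    ((Nat.card {f : (Σ i : Fin n, Fin (d i)) → (Σ i : Fin n, Fin (d i)) //
          IsPerfectMatching f ∧ Produces f G} : ℚ) /
        (Nat.card {f : (Σ i : Fin n, Fin (d i)) → (Σ i : Fin n, Fin (d i)) //
          IsPerfectMatching f} : ℚ)
        = (∏ i, (d i).factorial : ℚ) /
            (Nat.doubleFactorial (∑ i, d i - 1) * 2 ^ selfLoops G *
              ∏ e ∈ G.toFinset, (G.count e).factorial)) := by
  have hDne : ((2 : ℚ) ^ selfLoops G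
      * ((∏ e ∈ G.toFinset, (G.count e).factorial : ℕ) : ℚ)) ≠ 0 := by
    have : 0 < ∏ e ∈ G.toFinset, (G.count e).factorial :=
      Finset.prod_pos fun e _ => Nat.factorial_pos _
    positivity
  have h1 : (Nat.card {f : (Σ i : Fin n, Fin (d i)) → (Σ i : Fin n, Fin (d i)) //
      IsPerfectMatching f ∧ Produces f G} : ℚ)
      = (∏ i, (d i).factorial : ℚ) /
          (2 ^ selfLoops G * ∏ e ∈ G.toFinset, (G.count e).factorial) := by
    rw [eq_div_iff hDne]
    exact_mod_cast count_produces G hdeg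
  have h2 : (Nat.card {f : (Σ i : Fin n, Fin (d i)) → (Σ i : Fin n, Fin (d i)) //
      IsPerfectMatching f} : ℚ) = Nat.doubleFactorial (∑ i, d i - 1) := by
    exact_mod_cast count_all heven
  refine ⟨h1, h2, ?_⟩
  rw [h1, h2, div_div]
  congr 1
  ring
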